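/- Let Φ be a unital Schwartz map on a von Neumann algebra M admitting a faithful stationary state φ (φ∘Φ = φ, φ faithful). Then for every natural number n, the multiplicative domain of Φⁿ is contained in the multiplicative domain of Φⁿ⁻¹: D_{Φⁿ} ⊆ D_{Φⁿ⁻¹}. -/

import Mathlib

open scoped ComplexOrder

section
variable {M : Type*} [NormedRing M] [StarRing M] [CStarRing M] [NormedAlgebra ℂ M]
  [StarModule ℂ M] [CompleteSpace M] [PartialOrder M] [StarOrderedRing M]

/-- The multiplicative domain of a linear map `Φ`. -/
def multDomain (Φ : Module.End ℂ M) : Set M :=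
  {a : M | Φ (star a * a) = Φ (star a) * Φ a ∧ Φ (a * star a) = Φ a * Φ (star a)}

/-- `φ` is a state: unital and positive. -/
def IsState (φ : M →ₗ[ℂ] ℂ) : Prop :=
  φ 1 = 1 ∧ ∀ a : M, 0 ≤ φ (star a * a)

/-- `φ` is faithful. -/
def IsFaithful (φ : M →ₗ[ℂ] ℂ) : Prop :=
  ∀ a : M, φ (star a * a) = 0 → a = 0

/-- `Φ` is a unital Schwartz map. -/
def IsSchwartz (Φ : Module.End ℂ M) : Prop :=
  Φ 1 = 1 ∧ ∀ a : M, star (Φ a) * Φ a ≤ Φ (star a * a)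

/-- The `φ`-orthogonal complement of a set `R`. -/
def phiPerp (φ : M →ₗ[ℂ] ℂ) (R : Set M) : Set M :=
  {a : M | ∀ x ∈ R, φ (star a * x) = 0}


private lemma schwartz_nonneg {Φ : Module.End ℂ M} (hΦ : IsSchwartz Φ) {x : M}
    (hx : 0 ≤ x) : 0 ≤ Φ x := by
  rw [StarOrderedRing.nonneg_iff] at hx
  induction hx using AddSubmonoid.closure_induction with
  | mem s hs =>
    obtain ⟨s, rfl⟩ := hs
    exact le_trans (star_mul_self_nonneg _) (hΦ.2 s)
  | zero => simp
  | add x y _ _ hx hy => rw [map_add]; exact add_nonneg hx hy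

private lemma schwartz_mono {Φ : Module.End ℂ M} (hΦ : IsSchwartz Φ) {x y : M}
    (h : x ≤ y) : Φ x ≤ Φ y := by
  have := schwartz_nonneg hΦ (sub_nonneg.mpr h)
  rwa [map_sub, sub_nonneg] at this

private lemma schwartz_pow {Φ : Module.End ℂ M} (hΦ : IsSchwartz Φ) (n : ℕ) (a : M) :
    star ((Φ ^ n) a) * (Φ ^ n) a ≤ (Φ ^ n) (star a * a) := by
  induction n with
  | zero => simp
  | succ k ih =>
    have h1 : (Φ ^ (k + 1)) a = Φ ((Φ ^ k) a) := by
      rw [pow_succ']; rfl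
    have h2 : (Φ ^ (k + 1)) (star a * a) = Φ ((Φ ^ k) (star a * a)) := by
      rw [pow_succ']; rfl
    rw [h1, h2]
    exact le_trans (hΦ.2 ((Φ ^ k) a)) (schwartz_mono hΦ ih)

private lemma state_nonneg {φ : M →ₗ[ℂ] ℂ} (hφ : IsState φ) {x : M} (hx : 0 ≤ x) :
    0 ≤ φ x := by
  rw [StarOrderedRing.nonneg_iff] at hx
  induction hx using AddSubmonoid.closure_induction with
  | mem s hs => obtain ⟨s, rfl⟩ := hs; exact hφ.2 s
  | zero => simp
  | add x y _ _ hx hy => rw [map_add]; exact add_nonneg hx hy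

private lemma state_mono {φ : M →ₗ[ℂ] ℂ} (hφ : IsState φ) {x y : M} (h : x ≤ y) :
    φ x ≤ φ y := by
  have := state_nonneg hφ (sub_nonneg.mpr h)
  rwa [map_sub, sub_nonneg] at this

private lemma faithful_nonneg {φ : M →ₗ[ℂ] ℂ} (hφ : IsState φ) (hfaith : IsFaithful φ)
    {d : M} (hd : 0 ≤ d) (h0 : φ d = 0) : d = 0 := by
  rw [StarOrderedRing.nonneg_iff] at hd
  revert h0
  induction hd using AddSubmonoid.closure_induction with
  | mem s hs =>
    obtain ⟨s, rfl⟩ := hs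
    exact fun h0 => by rw [hfaith s h0]; simp
  | zero => exact fun _ => rfl
  | add x y hx hy ihx ihy =>
    intro h0
    have hxmem : (0 : M) ≤ x := StarOrderedRing.nonneg_iff.mpr hx
    have hymem : (0 : M) ≤ y := StarOrderedRing.nonneg_iff.mpr hy
    have hx0 : 0 ≤ φ x := state_nonneg hφ hxmem
    have hy0 : 0 ≤ φ y := state_nonneg hφ hymem
    rw [map_add] at h0
    obtain ⟨hx', hy'⟩ := (add_eq_zero_iff_of_nonneg hx0 hy0).mp h0
    rw [ihx hx', ihy hy', add_zero]

private lemma stat_pow {Φ : Module.End ℂ M} {φ : M →ₗ[ℂ] ℂ}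
    (hstat : ∀ a : M, φ (Φ a) = φ a) (n : ℕ) (a : M) : φ ((Φ ^ n) a) = φ a := by
  induction n with
  | zero => simp
  | succ k ih =>
    have : (Φ ^ (k + 1)) a = Φ ((Φ ^ k) a) := by rw [pow_succ']; rfl
    rw [this, hstat, ih]

private lemma multDomain_step {Φ : Module.End ℂ M} (hΦ : IsSchwartz Φ)
    {φ : M →ₗ[ℂ] ℂ} (hφ : IsState φ) (hfaith : IsFaithful φ)
    (hstat : ∀ a : M, φ (Φ a) = φ a) (n : ℕ) (a : M)
    (ha : (Φ ^ (n + 1)) (star a * a) = star ((Φ ^ (n + 1)) a) * (Φ ^ (n + 1)) a) :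
    (Φ ^ n) (star a * a) = star ((Φ ^ n) a) * (Φ ^ n) a := by
  set b := (Φ ^ n) a with hb
  have hd : 0 ≤ (Φ ^ n) (star a * a) - star b * b :=
    sub_nonneg.mpr (schwartz_pow hΦ n a)
  have h1 : (Φ ^ (n + 1)) a = Φ b := by rw [pow_succ']; rfl
  have h2 : (Φ ^ (n + 1)) (star a * a) = Φ ((Φ ^ n) (star a * a)) := by
    rw [pow_succ']; rfl
  -- φ (star a * a) ≤ φ (star b * b)
  have key1 : φ (star a * a) ≤ φ (star b * b) := by
    have e1 : φ (star a * a) = φ (star (Φ b) * Φ b) := by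
      rw [← h1, ← ha, h2, hstat, stat_pow hstat]
    have e2 : φ (star (Φ b) * Φ b) ≤ φ (Φ (star b * b)) :=
      state_mono hφ (hΦ.2 b)
    rw [e1, ← hstat (star b * b)]; exact e2
  have key2 : φ (star b * b) ≤ φ (star a * a) := by
    calc φ (star b * b) ≤ φ ((Φ ^ n) (star a * a)) :=
          state_mono hφ (schwartz_pow hΦ n a)
      _ = φ (star a * a) := stat_pow hstat n _
  have hzero : φ ((Φ ^ n) (star a * a) - star b * b) = 0 := by
    rw [map_sub, stat_pow hstat, le_antisymm key2 key1, sub_self]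
  exact sub_eq_zero.mp (faithful_nonneg hφ hfaith hd hzero)


private lemma schwartz_isSelfAdjoint {Φ : Module.End ℂ M} (hΦ : IsSchwartz Φ) {h : M}
    (hh : IsSelfAdjoint h) : IsSelfAdjoint (Φ h) := by
  letI : CStarAlgebra M := { }
  have halg : algebraMap ℝ M ‖h‖ = ((‖h‖ : ℂ)) • (1 : M) := by
    rw [Algebra.algebraMap_eq_smul_one, show ((‖h‖:ℂ)) = algebraMap ℝ ℂ ‖h‖ from rfl,
      algebraMap_smul]
  have h1 : (0:M) ≤ algebraMap ℝ M ‖h‖ - h := sub_nonneg.mpr hh.le_algebraMap_norm_self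
  have h2 : IsSelfAdjoint (Φ (algebraMap ℝ M ‖h‖ - h)) :=
    IsSelfAdjoint.of_nonneg (schwartz_nonneg hΦ h1)
  have h3 : Φ (algebraMap ℝ M ‖h‖ - h) = ((‖h‖ : ℂ)) • (1:M) - Φ h := by
    rw [map_sub, halg, map_smul, hΦ.1]
  have h4 : IsSelfAdjoint (((‖h‖ : ℂ)) • (1:M)) := by
    rw [IsSelfAdjoint, star_smul, star_one, Complex.star_def, Complex.conj_ofReal]
  rw [h3] at h2
  have := h4.sub h2
  rwa [sub_sub_cancel] at this

private lemma schwartz_star {Φ : Module.End ℂ M} (hΦ : IsSchwartz Φ) (a : M) :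
    Φ (star a) = star (Φ a) := by
  have hh : IsSelfAdjoint (a + star a) := by
    rw [IsSelfAdjoint, star_add, star_star, add_comm]
  have hk : IsSelfAdjoint (Complex.I • (star a - a)) := by
    rw [IsSelfAdjoint, star_smul, star_sub, star_star, Complex.star_def, Complex.conj_I,
      neg_smul, ← smul_neg, neg_sub]
  have c1 : (Complex.I/2) * Complex.I = -(1/2 : ℂ) := by
    rw [div_mul_eq_mul_div, Complex.I_mul_I]; norm_num
  have ea : a = (1/2 : ℂ) • (a + star a) + (Complex.I/2) • (Complex.I • (star a - a)) := by
    rw [smul_smul, c1]; module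
  have esa : star a
      = (1/2 : ℂ) • (a + star a) - (Complex.I/2) • (Complex.I • (star a - a)) := by
    rw [smul_smul, c1]; module
  have H1 := (schwartz_isSelfAdjoint hΦ hh).star_eq
  have H2 := (schwartz_isSelfAdjoint hΦ hk).star_eq
  have cstar : star (Complex.I/2 : ℂ) = -(Complex.I/2) := by
    rw [Complex.star_def, map_div₀, Complex.conj_I, map_ofNat, neg_div]
  have chalf : star ((1:ℂ)/2) = (1/2 : ℂ) := by
    rw [Complex.star_def, map_div₀, map_one, map_ofNat]
  have E1 : Φ (star a) = (1/2 : ℂ) • Φ (a + star a)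
      - (Complex.I/2) • Φ (Complex.I • (star a - a)) := by
    have := congrArg Φ esa
    rwa [map_sub, map_smul, map_smul] at this
  have E2 : Φ a = (1/2 : ℂ) • Φ (a + star a)
      + (Complex.I/2) • Φ (Complex.I • (star a - a)) := by
    have := congrArg Φ ea
    rwa [map_add, map_smul, map_smul] at this
  rw [E1, E2, star_add, star_smul, star_smul, H1, H2, cstar, chalf, neg_smul,
    ← sub_eq_add_neg]

private lemma schwartz_pow_star {Φ : Module.End ℂ M} (hΦ : IsSchwartz Φ) (n : ℕ) (a : M) :
    (Φ ^ n) (star a) = star ((Φ ^ n) a) := by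
  induction n with
  | zero => simp
  | succ k ih =>
    have h1 : ∀ x : M, (Φ ^ (k + 1)) x = Φ ((Φ ^ k) x) := fun x => by rw [pow_succ']; rfl
    rw [h1, h1, ih, schwartz_star hΦ]

/-- with a faithful stationary state, `D_{Φ^{n+1}} ⊆ D_{Φ^n}`. -/
theorem multDomain_pow_antitone
    (Φ : Module.End ℂ M) (hΦ : IsSchwartz Φ)
    (φ : M →ₗ[ℂ] ℂ) (hφ : IsState φ) (hfaith : IsFaithful φ)
    (hstat : ∀ a : M, φ (Φ a) = φ a) :
    ∀ n : ℕ, multDomain (Φ ^ (n + 1)) ⊆ multDomain (Φ ^ n) := by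
  intro n a ha
  obtain ⟨h1, h2⟩ := ha
  rw [schwartz_pow_star hΦ] at h1 h2
  constructor
  · rw [schwartz_pow_star hΦ]
    exact multDomain_step hΦ hφ hfaith hstat n a h1
  · rw [schwartz_pow_star hΦ]
    have := multDomain_step hΦ hφ hfaith hstat n (star a)
      (by simpa [star_star, schwartz_pow_star hΦ] using h2)
    simpa [star_star, schwartz_pow_star hΦ] using this

end
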